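/- Let a,b be real numbers and let α₁, α₃, α₄ : ℝ → ℝ be continuous. Define φ(t) = bt + ∫₀ᵗ (b·α₁(s) + α₃(s) + a⁴·α₄(s)) ds, x(t) = a·sin(φ(t)), y(t) = a·cos(φ(t)), z(t) = -a. Then for every continuous α₂ : ℝ → ℝ, (x,y,z) satisfies ẋ = (ax+by+xz)(1+α₁) + x(a+z)α₂ + yα₃ - y(x²+y²)(4az+x²+y²+2z²)α₄, ẏ = (-bx+ay+yz)(1+α₁) + y(a+z)α₂ - xα₃ + x(x²+y²)(4az+x²+y²+2z²)α₄, ż = -(2az+x²+y²+z²)(1+α₁+α₂) for all t ∈ ℝ. -/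

import Mathlib

theorem stmt5 (a b : ℝ)
    (α₁ α₂ α₃ α₄ : ℝ → ℝ)
    (hc1 : Continuous α₁) (hc2 : Continuous α₂) (hc3 : Continuous α₃)
    (hc4 : Continuous α₄)
    (φ x y z : ℝ → ℝ)
    (hφ : φ = fun t => b*t + ∫ s in (0:ℝ)..t, (b * α₁ s + α₃ s + a^4 * α₄ s))
    (hx : x = fun t => a * Real.sin (φ t))
    (hy : y = fun t => a * Real.cos (φ t))
    (hz : z = fun _ => -a) :
    ∀ t : ℝ,
      HasDerivAt x ((a*x t + b*y t + x t * z t)*(1 + α₁ t)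
        + x t*(a + z t)*α₂ t + y t * α₃ t
        - y t*(x t^2 + y t^2)*(4*a*z t + x t^2 + y t^2 + 2*z t^2)*α₄ t) t ∧
      HasDerivAt y ((-b*x t + a*y t + y t * z t)*(1 + α₁ t)
        + y t*(a + z t)*α₂ t - x t * α₃ t
        + x t*(x t^2 + y t^2)*(4*a*z t + x t^2 + y t^2 + 2*z t^2)*α₄ t) t ∧
      HasDerivAt z (-(2*a*z t + x t^2 + y t^2 + z t^2)*(1 + α₁ t + α₂ t)) t := by
  intro t
  have hcont : Continuous fun s => b * α₁ s + α₃ s + a^4 * α₄ s := by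
    continuity
  have hint : HasDerivAt (fun t => ∫ s in (0:ℝ)..t, (b * α₁ s + α₃ s + a^4 * α₄ s))
      (b * α₁ t + α₃ t + a^4 * α₄ t) t :=
    intervalIntegral.integral_hasDerivAt_right (hcont.intervalIntegrable _ _)
      (hcont.stronglyMeasurableAtFilter _ _) hcont.continuousAt
  have hφd : HasDerivAt φ (b + (b * α₁ t + α₃ t + a^4 * α₄ t)) t := by
    rw [hφ]
    exact (((hasDerivAt_id t).const_mul b).add hint).congr_deriv (by simp)
  have hxd : HasDerivAt x (a * Real.cos (φ t) * (b + (b * α₁ t + α₃ t + a^4 * α₄ t))) t := by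
    rw [hx]
    simpa [mul_comm, mul_assoc, mul_left_comm] using (hφd.sin).const_mul a
  have hyd : HasDerivAt y (-(a * Real.sin (φ t) * (b + (b * α₁ t + α₃ t + a^4 * α₄ t)))) t := by
    rw [hy]
    have := (hφd.cos).const_mul a
    exact this.congr_deriv (by ring)
  have P := Real.sin_sq_add_cos_sq (φ t)
  refine ⟨?_, ?_, ?_⟩
  · convert hxd using 1
    simp only [hx, hy, hz]
    linear_combination (-(a^5) * Real.cos (φ t)
      * (Real.sin (φ t)^2 + Real.cos (φ t)^2 - 1) * α₄ t) * P
  · convert hyd using 1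
    simp only [hx, hy, hz]
    linear_combination (a^5 * Real.sin (φ t)
      * (Real.sin (φ t)^2 + Real.cos (φ t)^2 - 1) * α₄ t) * P
  · have hzero : -(2*a*z t + x t^2 + y t^2 + z t^2)*(1 + α₁ t + α₂ t) = 0 := by
      simp only [hx, hy, hz]
      linear_combination (-(a^2) * (1 + α₁ t + α₂ t)) * P
    rw [hzero, hz]
    exact hasDerivAt_const t (-a)
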